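/- For every real number r > 1, let X_r = {f ∈ C[0,1] : f(0) = r·f(1)}, a closed subspace of the space C[0,1] of continuous real-valued functions on [0,1] with the supremum norm. Then t(X_r) = 1 + 1/r. -/

import Mathlib

/-- The thinness index `t(X)` of a normed space. -/
noncomputable def thinness (X : Type*) [NormedAddCommGroup X] : ℝ :=
  sInf {r : ℝ | 0 < r ∧ ∀ (n : ℕ) (x : Fin n → X), (∀ i, ‖x i‖ = 1) →
    ∀ ε : ℝ, 0 < ε → ∃ y : X, ‖y‖ = 1 ∧ ∀ i, ‖x i - y‖ < r + ε}

/-- The subspace `X_r = {f ∈ C[0,1] : f(0) = r f(1)}` of `C[0,1]`. -/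
def Xr (r : ℝ) : Subspace ℝ C(Set.Icc (0:ℝ) 1, ℝ) where
  carrier := {f | f ⟨0, by norm_num⟩ = r * f ⟨1, by norm_num⟩}
  zero_mem' := by simp
  add_mem' := by
    intro a b ha hb
    simp only [Set.mem_setOf_eq, ContinuousMap.add_apply] at *
    rw [ha, hb]; ring
  smul_mem' := by
    intro c f hf
    simp only [Set.mem_setOf_eq, ContinuousMap.smul_apply, smul_eq_mul] at *
    rw [hf]; ring

noncomputable def tentC (δ : ℝ) : C(Set.Icc (0:ℝ) 1, ℝ) :=
  ⟨fun t => max 0 (1 - (2/δ) * |t.1 - (1 - δ/2)|), by fun_prop⟩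

lemma tentC_apply (δ : ℝ) (t : Set.Icc (0:ℝ) 1) :
    tentC δ t = max 0 (1 - (2/δ) * |t.1 - (1 - δ/2)|) := rfl

lemma tentC_nonneg (δ : ℝ) (t : Set.Icc (0:ℝ) 1) : 0 ≤ tentC δ t := le_max_left _ _

lemma tentC_le_one {δ : ℝ} (hδ : 0 < δ) (t : Set.Icc (0:ℝ) 1) : tentC δ t ≤ 1 := by
  rw [tentC_apply]
  have h1 : 0 ≤ (2/δ) * |t.1 - (1 - δ/2)| := by positivity
  exact max_le zero_le_one (by linarith)

lemma tentC_zero {δ : ℝ} (hδ : 0 < δ) (hδ1 : δ ≤ 1) :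
    tentC δ ⟨0, by norm_num⟩ = 0 := by
  rw [tentC_apply]
  have habs : |(0:ℝ) - (1 - δ/2)| = 1 - δ/2 := by
    rw [abs_of_nonpos (by linarith)]; ring
  rw [habs]
  have h2 : (1:ℝ) ≤ (2/δ) * (1 - δ/2) := by
    rw [div_mul_eq_mul_div, le_div_iff₀ hδ]; nlinarith
  exact max_eq_left (by linarith)

lemma tentC_one {δ : ℝ} (hδ : 0 < δ) :
    tentC δ ⟨1, by norm_num⟩ = 0 := by
  rw [tentC_apply]
  have habs : |(1:ℝ) - (1 - δ/2)| = δ/2 := by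
    rw [abs_of_nonneg (by linarith)]; ring
  rw [habs]
  have : (2/δ) * (δ/2) = 1 := by field_simp
  rw [this]; simp

lemma tentC_peak {δ : ℝ} (hδ : 0 < δ) (hδ1 : δ ≤ 1) :
    tentC δ ⟨1 - δ/2, by constructor <;> linarith⟩ = 1 := by
  rw [tentC_apply]; simp

lemma tentC_eq_zero {δ : ℝ} (hδ : 0 < δ) (t : Set.Icc (0:ℝ) 1) (ht : t.1 ≤ 1 - δ) :
    tentC δ t = 0 := by
  rw [tentC_apply]
  have h1 : δ/2 ≤ |t.1 - (1 - δ/2)| := by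
    rw [abs_of_nonpos (by linarith)]; linarith
  have h2 : (1:ℝ) ≤ (2/δ) * |t.1 - (1 - δ/2)| := by
    calc (1:ℝ) = (2/δ) * (δ/2) := by field_simp
    _ ≤ _ := mul_le_mul_of_nonneg_left h1 (by positivity)
  exact max_eq_left (by linarith)

lemma tentC_norm {δ : ℝ} (hδ : 0 < δ) (hδ1 : δ ≤ 1) : ‖tentC δ‖ = 1 := by
  apply le_antisymm
  · rw [ContinuousMap.norm_le _ zero_le_one]
    intro t
    rw [Real.norm_eq_abs, abs_le]
    exact ⟨by linarith [tentC_nonneg δ t], tentC_le_one hδ t⟩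
  · calc (1:ℝ) = ‖tentC δ ⟨1 - δ/2, by constructor <;> linarith⟩‖ := by
          rw [tentC_peak hδ hδ1]; simp
    _ ≤ ‖tentC δ‖ := (tentC δ).norm_coe_le_norm _

noncomputable def slopeC (r : ℝ) : C(Set.Icc (0:ℝ) 1, ℝ) :=
  ⟨fun t => 1 - (1 - 1/r) * t.1, by fun_prop⟩

lemma slopeC_apply (r : ℝ) (t : Set.Icc (0:ℝ) 1) : slopeC r t = 1 - (1 - 1/r) * t.1 := rfl

lemma slopeC_bounds {r : ℝ} (hr : 1 < r) (t : Set.Icc (0:ℝ) 1) :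
    1/r ≤ slopeC r t ∧ slopeC r t ≤ 1 := by
  have hr0 : (0:ℝ) < r := by linarith
  have h1 : (1:ℝ) - 1/r ≥ 0 := by
    have : 1/r < 1 := by rw [div_lt_one hr0]; linarith
    linarith
  obtain ⟨h0, h2⟩ := t.2
  rw [slopeC_apply]
  exact ⟨by nlinarith, by nlinarith⟩

lemma slopeC_norm {r : ℝ} (hr : 1 < r) : ‖slopeC r‖ = 1 := by
  have hr0 : (0:ℝ) < r := by linarith
  apply le_antisymm
  · rw [ContinuousMap.norm_le _ zero_le_one]
    intro t
    obtain ⟨h1, h2⟩ := slopeC_bounds hr t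
    have : (0:ℝ) < 1/r := by positivity
    rw [Real.norm_eq_abs, abs_le]
    exact ⟨by linarith, h2⟩
  · calc (1:ℝ) = ‖slopeC r ⟨0, by norm_num⟩‖ := by rw [slopeC_apply]; simp
    _ ≤ ‖slopeC r‖ := (slopeC r).norm_coe_le_norm _

lemma exists_norm_attained (y : C(Set.Icc (0:ℝ) 1, ℝ)) :
    ∃ t, |y t| = ‖y‖ := by
  have hne : (Set.univ : Set (Set.Icc (0:ℝ) 1)).Nonempty := ⟨⟨0, by norm_num⟩, trivial⟩
  obtain ⟨t0, -, ht0⟩ := isCompact_univ.exists_isMaxOn hne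
    (Continuous.continuousOn (by fun_prop : Continuous fun t => |y t|))
  refine ⟨t0, le_antisymm (y.norm_coe_le_norm t0) ?_⟩
  rw [ContinuousMap.norm_le _ (abs_nonneg _)]
  exact fun t => ht0 (Set.mem_univ t)

/-- For every `r > 1`, the space `X_r = {f ∈ C[0,1] : f(0) = r f(1)}` satisfies
`t(X_r) = 1 + 1/r`. -/
theorem thinness_Xr (r : ℝ) (hr : 1 < r) : thinness (Xr r) = 1 + 1 / r := by
  have hr0 : (0:ℝ) < r := by linarith
  have hir0 : (0:ℝ) < 1/r := by positivity
  -- Membership: 1 + 1/r belongs to the defining set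
  have hmem : (1 + 1/r) ∈ {s : ℝ | 0 < s ∧ ∀ (n : ℕ) (x : Fin n → (Xr r)), (∀ i, ‖x i‖ = 1) →
      ∀ ε : ℝ, 0 < ε → ∃ y : (Xr r), ‖y‖ = 1 ∧ ∀ i, ‖x i - y‖ < s + ε} := by
    constructor
    · positivity
    intro n x hx ε hε
    -- choose δ
    have hδ : ∃ δ : ℝ, 0 < δ ∧ δ ≤ 1 ∧ ∀ (i : Fin n) (t : Set.Icc (0:ℝ) 1),
        1 - δ < t.1 → |(x i : C(Set.Icc (0:ℝ) 1, ℝ)) t -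
          (x i : C(Set.Icc (0:ℝ) 1, ℝ)) ⟨1, by norm_num⟩| < ε/2 := by
      rcases Nat.eq_zero_or_pos n with hn | hn
      · subst hn; exact ⟨1, one_pos, le_refl 1, fun i => i.elim0⟩
      · haveI : Nonempty (Fin n) := ⟨⟨0, hn⟩⟩
        have hc : ∀ i : Fin n, ∃ δ > 0, ∀ t : Set.Icc (0:ℝ) 1,
            dist t (⟨1, by norm_num⟩ : Set.Icc (0:ℝ) 1) < δ →
            dist ((x i : C(Set.Icc (0:ℝ) 1, ℝ)) t)
              ((x i : C(Set.Icc (0:ℝ) 1, ℝ)) ⟨1, by norm_num⟩) < ε/2 := by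
          intro i
          exact Metric.continuousAt_iff.mp
            ((x i : C(Set.Icc (0:ℝ) 1, ℝ)).continuous.continuousAt) (ε/2) (by linarith)
        choose δi hδi hprop using hc
        refine ⟨min 1 (Finset.univ.inf' Finset.univ_nonempty δi), ?_, min_le_left _ _, ?_⟩
        · apply lt_min one_pos
          rw [Finset.lt_inf'_iff]
          exact fun i _ => hδi i
        · intro i t ht
          have hd : dist t (⟨1, by norm_num⟩ : Set.Icc (0:ℝ) 1) < δi i := by
            rw [Subtype.dist_eq, Real.dist_eq]
            have h2 := t.2.2
            have hle : min 1 (Finset.univ.inf' Finset.univ_nonempty δi) ≤ δi i :=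
              le_trans (min_le_right _ _) (Finset.inf'_le _ (Finset.mem_univ i))
            rw [abs_of_nonpos (by simpa using h2)]
            simp only [Set.Icc.coe_one] at *
            linarith
          have := hprop i t hd
          rwa [Real.dist_eq] at this
    obtain ⟨δ, hδ0, hδ1, hδprop⟩ := hδ
    have hymem : tentC δ ∈ Xr r := by
      show tentC δ ⟨0, by norm_num⟩ = r * tentC δ ⟨1, by norm_num⟩
      rw [tentC_zero hδ0 hδ1, tentC_one hδ0]; ring
    refine ⟨⟨tentC δ, hymem⟩, tentC_norm hδ0 hδ1, ?_⟩
    intro i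
    have hkey : ‖(x i : C(Set.Icc (0:ℝ) 1, ℝ)) - tentC δ‖ ≤ 1 + 1/r + ε/2 := by
      rw [ContinuousMap.norm_le _ (by positivity)]
      intro t
      rw [ContinuousMap.sub_apply, Real.norm_eq_abs, abs_le]
      have hxt : |(x i : C(Set.Icc (0:ℝ) 1, ℝ)) t| ≤ 1 := by
        have h := (x i : C(Set.Icc (0:ℝ) 1, ℝ)).norm_coe_le_norm t
        rw [Real.norm_eq_abs] at h
        have : ‖(x i : C(Set.Icc (0:ℝ) 1, ℝ))‖ = 1 := hx i
        linarith
      have hx1 : |(x i : C(Set.Icc (0:ℝ) 1, ℝ)) ⟨1, by norm_num⟩| ≤ 1/r := by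
        have hmemi : (x i : C(Set.Icc (0:ℝ) 1, ℝ)) ⟨0, by norm_num⟩ =
            r * (x i : C(Set.Icc (0:ℝ) 1, ℝ)) ⟨1, by norm_num⟩ := (x i).2
        have hx0 : |(x i : C(Set.Icc (0:ℝ) 1, ℝ)) ⟨0, by norm_num⟩| ≤ 1 := by
          have h := (x i : C(Set.Icc (0:ℝ) 1, ℝ)).norm_coe_le_norm ⟨0, by norm_num⟩
          rw [Real.norm_eq_abs] at h
          have : ‖(x i : C(Set.Icc (0:ℝ) 1, ℝ))‖ = 1 := hx i
          linarith
        rw [hmemi, abs_mul, abs_of_pos hr0] at hx0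
        rw [le_div_iff₀ hr0]
        linarith
      rcases le_or_gt t.1 (1 - δ) with ht | ht
      · rw [tentC_eq_zero hδ0 t ht, sub_zero]
        rw [abs_le] at hxt
        constructor <;> [linarith; linarith]
      · have hcl := hδprop i t ht
        rw [abs_lt] at hcl
        rw [abs_le] at hx1
        have h1 := tentC_nonneg δ t
        have h2 := tentC_le_one hδ0 t
        rw [abs_le] at hxt
        constructor <;> [linarith; linarith]
    have : ‖x i - (⟨tentC δ, hymem⟩ : Xr r)‖ =
        ‖(x i : C(Set.Icc (0:ℝ) 1, ℝ)) - tentC δ‖ := rfl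
    rw [this]
    linarith
  -- Lower bound
  have hlb : ∀ s ∈ {s : ℝ | 0 < s ∧ ∀ (n : ℕ) (x : Fin n → (Xr r)), (∀ i, ‖x i‖ = 1) →
      ∀ ε : ℝ, 0 < ε → ∃ y : (Xr r), ‖y‖ = 1 ∧ ∀ i, ‖x i - y‖ < s + ε},
      1 + 1/r ≤ s := by
    rintro s ⟨hs0, hsp⟩
    by_contra hcon
    push_neg at hcon
    have hfmem : slopeC r ∈ Xr r := by
      show slopeC r ⟨0, by norm_num⟩ = r * slopeC r ⟨1, by norm_num⟩
      rw [slopeC_apply, slopeC_apply]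
      simp only [Set.Icc.coe_zero, Set.Icc.coe_one, mul_zero, sub_zero, mul_one]
      field_simp
      ring
    set f : Xr r := ⟨slopeC r, hfmem⟩ with hf
    have hfn : ‖f‖ = 1 := slopeC_norm hr
    set ε := (1 + 1/r - s)/2 with hεdef
    have hε0 : 0 < ε := by rw [hεdef]; linarith
    obtain ⟨y, hy1, hylt⟩ := hsp 2 ![f, -f] (by
      intro i
      fin_cases i
      · show ‖f‖ = 1
        exact hfn
      · show ‖-f‖ = 1
        exact (norm_neg f).trans hfn) ε hε0
    obtain ⟨t0, ht0⟩ := exists_norm_attained (y : C(Set.Icc (0:ℝ) 1, ℝ))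
    have hyt : |(y : C(Set.Icc (0:ℝ) 1, ℝ)) t0| = 1 := by
      rw [ht0]; exact hy1
    obtain ⟨hft, hft1⟩ := slopeC_bounds hr t0
    have h0 := hylt 0
    have h1 := hylt 1
    simp only [Matrix.cons_val_zero, Matrix.cons_val_one, Matrix.head_cons] at h0 h1
    have hse : s + ε < 1 + 1/r := by rw [hεdef]; linarith
    rcases (abs_eq zero_le_one).mp hyt with hv | hv
    · -- y t0 = 1, use -f
      have hlow : ‖(-f - y : Xr r)‖ ≥ 1 + 1/r := by
        have heq : ‖(-f - y : Xr r)‖ =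
            ‖(-(slopeC r)) - (y : C(Set.Icc (0:ℝ) 1, ℝ))‖ := rfl
        rw [heq]
        have h := ((-(slopeC r)) - (y : C(Set.Icc (0:ℝ) 1, ℝ))).norm_coe_le_norm t0
        rw [Real.norm_eq_abs] at h
        have happ : ((-(slopeC r)) - (y : C(Set.Icc (0:ℝ) 1, ℝ))) t0 =
            -(slopeC r t0) - (y : C(Set.Icc (0:ℝ) 1, ℝ)) t0 := rfl
        rw [happ, hv] at h
        have : |-(slopeC r t0) - 1| = slopeC r t0 + 1 := by
          rw [abs_of_nonpos (by linarith)]; ring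
        rw [this] at h
        linarith
      linarith
    · -- y t0 = -1, use f
      have hlow : ‖(f - y : Xr r)‖ ≥ 1 + 1/r := by
        have heq : ‖(f - y : Xr r)‖ =
            ‖(slopeC r) - (y : C(Set.Icc (0:ℝ) 1, ℝ))‖ := rfl
        rw [heq]
        have h := ((slopeC r) - (y : C(Set.Icc (0:ℝ) 1, ℝ))).norm_coe_le_norm t0
        rw [Real.norm_eq_abs] at h
        have happ : ((slopeC r) - (y : C(Set.Icc (0:ℝ) 1, ℝ))) t0 =
            slopeC r t0 - (y : C(Set.Icc (0:ℝ) 1, ℝ)) t0 := rfl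
        rw [happ, hv] at h
        have : |slopeC r t0 - (-1)| = slopeC r t0 + 1 := by
          rw [abs_of_nonneg (by linarith)]; ring
        rw [this] at h
        linarith
      linarith
  unfold thinness
  exact le_antisymm (csInf_le ⟨0, fun s hs => le_of_lt hs.1⟩ hmem) (le_csInf ⟨_, hmem⟩ hlb)
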